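/- Let F : 2^{[n]} → ℝ be a set function with Lovász extension f : ℝ^n → ℝ. Then F is submodular if and only if f is a convex function. -/

import Mathlib

/-- A set function `F : 2^[n] → ℝ` is submodular if
`F(A) + F(B) ≥ F(A ∪ B) + F(A ∩ B)` for all `A, B`. -/
def Submodular {n : ℕ} (F : Finset (Fin n) → ℝ) : Prop :=
  ∀ A B : Finset (Fin n), F (A ∪ B) + F (A ∩ B) ≤ F A + F B

/-- The Lovász extension of a set function `F : 2^[n] → ℝ`:
writing `y_1 ≥ y_2 ≥ ⋯ ≥ y_n` for the entries of `x` in decreasing order and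
`S_k` for the set of indices of the `k` largest entries (so `S_0 = ∅`),
`f(x) = F(∅) + Σ_{k=1}^n y_k (F(S_k) − F(S_{k−1}))`. -/
noncomputable def lovasz {n : ℕ} (F : Finset (Fin n) → ℝ) (x : Fin n → ℝ) : ℝ :=
  F ∅ + ∑ j : Fin n, x (Tuple.sort x j.rev) *
    (F (Finset.univ.filter fun i : Fin n => n - ((j : ℕ) + 1) ≤ ((Tuple.sort x).symm i : ℕ)) -
     F (Finset.univ.filter fun i : Fin n => n - (j : ℕ) ≤ ((Tuple.sort x).symm i : ℕ)))

open Finset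

variable {n : ℕ}

def lvChain (q : Equiv.Perm (Fin n)) (m : ℕ) : Finset (Fin n) :=
  Finset.univ.filter fun i => ((q.symm i : ℕ) < m)

noncomputable def lvC (F : Finset (Fin n) → ℝ) (q : Equiv.Perm (Fin n)) (m : ℕ) : ℝ :=
  F (lvChain q (m+1)) - F (lvChain q m)

noncomputable def lvForm (F : Finset (Fin n) → ℝ) (q : Equiv.Perm (Fin n)) (x : Fin n → ℝ) : ℝ :=
  F ∅ + ∑ j : Fin n, x (q j) * lvC F q (j : ℕ)

noncomputable def lvSortq (x : Fin n → ℝ) : Equiv.Perm (Fin n) := (Fin.revPerm).trans (Tuple.sort x)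

lemma lvChain_zero (q : Equiv.Perm (Fin n)) : lvChain q 0 = ∅ := by
  simp [lvChain]

lemma lvChain_top (q : Equiv.Perm (Fin n)) {m : ℕ} (hm : n ≤ m) : lvChain q m = Finset.univ := by
  ext i; simp [lvChain]; exact lt_of_lt_of_le (q.symm i).isLt hm

lemma lvChain_succ (q : Equiv.Perm (Fin n)) (m : ℕ) (hm : m < n) :
    lvChain q (m+1) = insert (q ⟨m, hm⟩) (lvChain q m) := by
  ext i
  simp only [lvChain, Finset.mem_filter, Finset.mem_univ, true_and, Finset.mem_insert]
  constructor
  · intro h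
    rcases Nat.lt_succ_iff_lt_or_eq.mp h with h | h
    · exact Or.inr h
    · left; rw [← Equiv.apply_symm_apply q i]; congr 1; exact Fin.ext h
  · rintro (rfl | h)
    · simp
    · omega

lemma lv_not_mem_chain (q : Equiv.Perm (Fin n)) (m : ℕ) (hm : m < n) :
    q ⟨m, hm⟩ ∉ lvChain q m := by
  simp [lvChain]

lemma lovasz_eq_lvForm (F : Finset (Fin n) → ℝ) (x : Fin n → ℝ) :
    lovasz F x = lvForm F (lvSortq x) x := by
  unfold lovasz lvForm
  congr 1
  apply Finset.sum_congr rfl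
  intro j _
  have h1 : ∀ i : Fin n, ((lvSortq x).symm i : ℕ) = n - ((((Tuple.sort x).symm i) : ℕ) + 1) := by
    intro i; simp [lvSortq, Fin.val_rev]
  have e1 : (Finset.univ.filter fun i : Fin n =>
      n - ((j : ℕ) + 1) ≤ ((Tuple.sort x).symm i : ℕ)) = lvChain (lvSortq x) ((j : ℕ)+1) := by
    unfold lvChain
    apply Finset.filter_congr; intro i _; rw [h1]
    have := ((Tuple.sort x).symm i).isLt
    have := j.isLt
    constructor <;> intro <;> omega
  have e2 : (Finset.univ.filter fun i : Fin n =>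
      n - (j : ℕ) ≤ ((Tuple.sort x).symm i : ℕ)) = lvChain (lvSortq x) (j : ℕ) := by
    unfold lvChain
    apply Finset.filter_congr; intro i _; rw [h1]
    have := ((Tuple.sort x).symm i).isLt
    have := j.isLt
    constructor <;> intro <;> omega
  rw [e1, e2]
  rfl

lemma lv_sortq_antitone (x : Fin n → ℝ) : Antitone (fun j : Fin n => x (lvSortq x j)) := by
  intro j k hjk
  have h := Tuple.monotone_sort x (Fin.rev_le_rev.mpr hjk)
  simpa [lvSortq, Function.comp] using h

/-- telescoping -/
lemma lv_sum_c (F : Finset (Fin n) → ℝ) (q : Equiv.Perm (Fin n)) (m : ℕ) :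
    ∑ j ∈ Finset.range m, lvC F q j = F (lvChain q m) - F ∅ := by
  have := Finset.sum_range_sub (fun k => F (lvChain q k)) m
  simp only [lvC]
  rw [this, lvChain_zero]

/-- Lemma A (greedy bound): the chain marginals of elements of `A` sum to at most `F A - F ∅`. -/
lemma lv_greedy (F : Finset (Fin n) → ℝ) (hF : Submodular F) (q : Equiv.Perm (Fin n))
    (A : Finset (Fin n)) :
    ∑ k : Fin n, (if q k ∈ A then lvC F q (k : ℕ) else 0) ≤ F A - F ∅ := by
  have key : ∀ m : ℕ, m ≤ n →
      ∑ k ∈ Finset.range m, (if h : k < n then (if q ⟨k, h⟩ ∈ A then lvC F q k else 0) else 0) ≤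
        F (lvChain q m ∩ A) - F ∅ := by
    intro m
    induction m with
    | zero => intro _; simp [lvChain_zero]
    | succ m ih =>
      intro hm
      have hmn : m < n := hm
      rw [Finset.sum_range_succ, dif_pos hmn]
      have hins : lvChain q (m+1) = insert (q ⟨m, hmn⟩) (lvChain q m) := lvChain_succ q m hmn
      have hnot : q ⟨m, hmn⟩ ∉ lvChain q m := lv_not_mem_chain q m hmn
      have hstep : (if q ⟨m, hmn⟩ ∈ A then lvC F q m else 0) ≤
          F (lvChain q (m+1) ∩ A) - F (lvChain q m ∩ A) := by
        by_cases hA : q ⟨m, hmn⟩ ∈ A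
        · rw [if_pos hA]
          set a := q ⟨m, hmn⟩ with ha
          set C := lvChain q m with hC
          have hsub := hF C (insert a (C ∩ A))
          have h1 : C ∪ insert a (C ∩ A) = insert a C := by
            ext i
            simp only [Finset.mem_union, Finset.mem_insert, Finset.mem_inter]
            tauto
          have h2 : C ∩ insert a (C ∩ A) = C ∩ A := by
            ext i
            simp only [Finset.mem_inter, Finset.mem_insert]
            constructor
            · rintro ⟨hCi, (rfl | ⟨_, hAi⟩)⟩
              · exact absurd hCi hnot
              · exact ⟨hCi, hAi⟩
            · rintro ⟨hCi, hAi⟩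
              exact ⟨hCi, Or.inr ⟨hCi, hAi⟩⟩
          have h3 : lvChain q (m+1) ∩ A = insert a (C ∩ A) := by
            rw [hins, Finset.insert_inter_of_mem hA]
          rw [h1, h2] at hsub
          unfold lvC
          rw [hins, Finset.insert_inter_of_mem hA, ← hC]
          linarith
        · rw [if_neg hA]
          have h4 : lvChain q (m+1) ∩ A = lvChain q m ∩ A := by
            rw [hins, Finset.insert_inter_of_notMem hA]
          rw [h4]
          simp
      have hih := ih (le_of_lt hmn)
      linarith
  calc ∑ k : Fin n, (if q k ∈ A then lvC F q (k : ℕ) else 0)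
      = ∑ k ∈ Finset.range n,
          (if h : k < n then (if q ⟨k, h⟩ ∈ A then lvC F q k else 0) else 0) := by
        rw [← Fin.sum_univ_eq_sum_range]
        apply Finset.sum_congr rfl
        intro k _
        rw [dif_pos k.isLt]
    _ ≤ F (lvChain q n ∩ A) - F ∅ := key n le_rfl
    _ = F A - F ∅ := by rw [lvChain_top q le_rfl, Finset.univ_inter]


lemma lv_abel (N : ℕ) (y D : ℕ → ℝ) (hy : ∀ m, m + 1 < N → y (m+1) ≤ y m)
    (hD : ∀ m, m ≤ N → D m ≤ 0) (hD0 : D 0 = 0) (hDN : D N = 0) :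
    ∑ j ∈ Finset.range N, y j * (D (j+1) - D j) ≤ 0 := by
  cases N with
  | zero => simp
  | succ k =>
    have key : ∀ m, m ≤ k → ∑ j ∈ Finset.range m, y j * (D (j+1) - D j) ≤ y m * D m := by
      intro m
      induction m with
      | zero => intro _; simp [hD0]
      | succ m ih =>
        intro hm
        rw [Finset.sum_range_succ]
        have h1 := ih (Nat.le_of_succ_le hm)
        have h2 : y (m+1) ≤ y m := hy m (by omega)
        have h3 : D (m+1) ≤ 0 := hD (m+1) (by omega)
        have h4 : (y m - y (m+1)) * D (m+1) ≤ 0 :=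
          mul_nonpos_of_nonneg_of_nonpos (by linarith) h3
        nlinarith [h1, h4]
    have h1 := key k le_rfl
    rw [Finset.sum_range_succ, hDN]
    nlinarith [h1]

lemma lv_maxle (F : Finset (Fin n) → ℝ) (hF : Submodular F) (τ : Equiv.Perm (Fin n))
    (x : Fin n → ℝ) : lvForm F τ x ≤ lovasz F x := by
  rw [lovasz_eq_lvForm]
  rcases Nat.eq_zero_or_pos n with hn | hn
  · subst hn
    simp [lvForm]
  set σ := lvSortq x with hσ
  have hanti : Antitone (fun j : Fin n => x (σ j)) := lv_sortq_antitone x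
  set y : ℕ → ℝ := fun j => x (σ ⟨min j (n-1), by omega⟩) with hy
  set v : ℕ → ℝ := fun j =>
    if h : j < n then lvC F τ ((τ.symm (σ ⟨j, h⟩)) : ℕ) else 0 with hv
  set w : ℕ → ℝ := fun j => lvC F σ j with hw
  set D : ℕ → ℝ := fun m => (∑ j ∈ Finset.range m, v j) - (∑ j ∈ Finset.range m, w j) with hD
  have hyk : ∀ k : Fin n, y (k : ℕ) = x (σ k) := by
    intro k
    have hk : (⟨min (k : ℕ) (n-1), by omega⟩ : Fin n) = k := by
      apply Fin.ext
      have := k.isLt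
      simp only []
      omega
    simp only [hy, hk]
  have hvk : ∀ k : Fin n, v (k : ℕ) = lvC F τ ((τ.symm (σ k)) : ℕ) := by
    intro k
    simp only [hv, dif_pos k.isLt]
  have hWm : ∀ m : ℕ, ∑ j ∈ Finset.range m, w j = F (lvChain σ m) - F ∅ := fun m => lv_sum_c F σ m
  have hVm : ∀ m : ℕ, m ≤ n → ∑ j ∈ Finset.range m, v j =
      ∑ k : Fin n, (if τ k ∈ lvChain σ m then lvC F τ (k : ℕ) else 0) := by
    intro m hm
    have hrange : Finset.range m = (Finset.range n).filter (fun j => j < m) := by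
      ext j; simp [Finset.mem_range]; omega
    rw [hrange, Finset.sum_filter,
      ← Fin.sum_univ_eq_sum_range (fun j => if j < m then v j else 0) n,
      ← Equiv.sum_comp (τ.trans σ.symm)
        (fun k : Fin n => if (k : ℕ) < m then v (k : ℕ) else 0)]
    apply Finset.sum_congr rfl
    intro k _
    simp only [Equiv.trans_apply]
    have hmem : τ k ∈ lvChain σ m ↔ ((σ.symm (τ k) : Fin n) : ℕ) < m := by
      simp [lvChain]
    by_cases hc : ((σ.symm (τ k) : Fin n) : ℕ) < m
    · simp only [hc, ↓reduceIte]; rw [if_pos (hmem.mpr hc), hvk (σ.symm (τ k))]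
      simp
    · simp only [hc, ↓reduceIte]; rw [if_neg (fun hk => hc (hmem.mp hk))]
  have hD0 : D 0 = 0 := by simp [hD]
  have hDle : ∀ m, m ≤ n → D m ≤ 0 := by
    intro m hm
    rw [hD]
    simp only
    rw [hVm m hm, hWm m]
    have := lv_greedy F hF τ (lvChain σ m)
    linarith
  have hDN : D n = 0 := by
    rw [hD]
    simp only
    rw [hVm n le_rfl, hWm n, lvChain_top σ le_rfl]
    have : ∑ k : Fin n, (if τ k ∈ (Finset.univ : Finset (Fin n)) then lvC F τ (k : ℕ) else 0)
        = ∑ k : Fin n, lvC F τ (k : ℕ) := by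
      apply Finset.sum_congr rfl; intro k _; rw [if_pos (Finset.mem_univ _)]
    rw [this, Fin.sum_univ_eq_sum_range (fun j => lvC F τ j) n, lv_sum_c F τ n,
      lvChain_top τ le_rfl]
    ring
  have hymono : ∀ m, m + 1 < n → y (m+1) ≤ y m := by
    intro m hmn
    rw [hy]
    simp only
    apply hanti
    simp only [Fin.mk_le_mk]
    omega
  have habel := lv_abel n y D hymono hDle hD0 hDN
  have hL : lvForm F τ x = F ∅ + ∑ j ∈ Finset.range n, y j * v j := by
    unfold lvForm
    congr 1
    rw [← Equiv.sum_comp (σ.trans τ.symm) (fun j : Fin n => x (τ j) * lvC F τ (j : ℕ)),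
      ← Fin.sum_univ_eq_sum_range (fun j => y j * v j) n]
    apply Finset.sum_congr rfl
    intro k _
    simp only [Equiv.trans_apply, Equiv.apply_symm_apply, hyk k, hvk k]
  have hR : lvForm F σ x = F ∅ + ∑ j ∈ Finset.range n, y j * w j := by
    unfold lvForm
    congr 1
    rw [← Fin.sum_univ_eq_sum_range (fun j => y j * w j) n]
    apply Finset.sum_congr rfl
    intro k _
    rw [hyk k]
  have hdiff : ∑ j ∈ Finset.range n, y j * (D (j+1) - D j)
      = (∑ j ∈ Finset.range n, y j * v j) - (∑ j ∈ Finset.range n, y j * w j) := by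
    rw [← Finset.sum_sub_distrib]
    apply Finset.sum_congr rfl
    intro j _
    rw [hD]
    simp only [Finset.sum_range_succ]
    ring
  rw [hL, hR]
  rw [hdiff] at habel
  linarith


lemma lv_initseg (S : Finset (Fin n)) (hdc : ∀ j ∈ S, ∀ j' : Fin n, j' ≤ j → j' ∈ S) :
    S = Finset.univ.filter fun j : Fin n => (j : ℕ) < S.card := by
  ext j
  simp only [Finset.mem_filter, Finset.mem_univ, true_and]
  constructor
  · intro hj
    by_contra hge
    push_neg at hge
    have hsub : Finset.Iic j ⊆ S := fun k hk => hdc j hj k (Finset.mem_Iic.mp hk)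
    have := Finset.card_le_card hsub
    rw [Fin.card_Iic] at this
    omega
  · intro hj
    by_contra hjS
    have hsub : S ⊆ Finset.Iio j := by
      intro k hk
      rw [Finset.mem_Iio]
      by_contra hle
      push_neg at hle
      exact hjS (hdc k hk j hle)
    have := Finset.card_le_card hsub
    rw [Fin.card_Iio] at this
    omega

lemma lv_eval (F : Finset (Fin n) → ℝ) (A B : Finset (Fin n)) (hAB : A ⊆ B) (a b : ℝ)
    (ha : 0 < a) (hb : 0 < b) :
    lovasz F (fun i => (if i ∈ A then a else 0) + (if i ∈ B then b else 0)) =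
      F ∅ + a * (F A - F ∅) + b * (F B - F ∅) := by
  set x : Fin n → ℝ := fun i => (if i ∈ A then a else 0) + (if i ∈ B then b else 0) with hxdef
  set σ := lvSortq x with hσ
  have hanti : Antitone (fun j : Fin n => x (σ j)) := lv_sortq_antitone x
  have hx : ∀ i, x i = if i ∈ A then a + b else if i ∈ B then b else 0 := by
    intro i
    show (if i ∈ A then a else 0) + (if i ∈ B then b else 0) = _
    by_cases hiA : i ∈ A
    · rw [if_pos hiA, if_pos (hAB hiA), if_pos hiA]
    · rw [if_neg hiA, if_neg hiA]
      by_cases hiB : i ∈ B <;> simp [hiB]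
  have hxA : ∀ i, x i = a + b ↔ i ∈ A := by
    intro i
    rw [hx i]
    split_ifs with h1 h2
    · exact iff_of_true rfl h1
    · exact iff_of_false (by linarith) h1
    · exact iff_of_false (by linarith) h1
  have hxB : ∀ i, b ≤ x i ↔ i ∈ B := by
    intro i
    rw [hx i]
    split_ifs with h1 h2
    · exact iff_of_true (by linarith) (hAB h1)
    · exact iff_of_true le_rfl h2
    · exact iff_of_false (by linarith) h2
  have hxle : ∀ i, x i ≤ a + b := by
    intro i
    rw [hx i]
    split_ifs <;> linarith
  set SA := Finset.univ.filter fun j : Fin n => x (σ j) = a + b with hSA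
  set SB := Finset.univ.filter fun j : Fin n => b ≤ x (σ j) with hSB
  have hSAcard : SA.card = A.card := by
    have himg : SA = A.image σ.symm := by
      ext j
      simp only [hSA, Finset.mem_filter, Finset.mem_univ, true_and, Finset.mem_image]
      constructor
      · intro h
        exact ⟨σ j, (hxA (σ j)).mp h, by simp⟩
      · rintro ⟨i, hi, rfl⟩
        rw [Equiv.apply_symm_apply]
        exact (hxA i).mpr hi
    rw [himg, Finset.card_image_of_injective _ σ.symm.injective]
  have hSBcard : SB.card = B.card := by
    have himg : SB = B.image σ.symm := by
      ext j
      simp only [hSB, Finset.mem_filter, Finset.mem_univ, true_and, Finset.mem_image]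
      constructor
      · intro h
        exact ⟨σ j, (hxB (σ j)).mp h, by simp⟩
      · rintro ⟨i, hi, rfl⟩
        rw [Equiv.apply_symm_apply]
        exact (hxB i).mpr hi
    rw [himg, Finset.card_image_of_injective _ σ.symm.injective]
  have memSA : ∀ j : Fin n, x (σ j) = a + b ↔ (j : ℕ) < A.card := by
    have hdc : ∀ j ∈ SA, ∀ j' : Fin n, j' ≤ j → j' ∈ SA := by
      intro j hj j' hle
      simp only [hSA, Finset.mem_filter, Finset.mem_univ, true_and] at hj ⊢
      exact le_antisymm (hxle _) (hj ▸ hanti hle)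
    have := lv_initseg SA hdc
    rw [hSAcard] at this
    intro j
    constructor
    · intro h
      have : j ∈ Finset.univ.filter fun j : Fin n => (j : ℕ) < A.card := by
        rw [← this]
        simp only [hSA, Finset.mem_filter, Finset.mem_univ, true_and]
        exact h
      simpa using this
    · intro h
      have hj : j ∈ SA := by
        rw [this]
        simp only [Finset.mem_filter, Finset.mem_univ, true_and]
        exact h
      simpa [hSA] using hj
  have memSB : ∀ j : Fin n, b ≤ x (σ j) ↔ (j : ℕ) < B.card := by
    have hdc : ∀ j ∈ SB, ∀ j' : Fin n, j' ≤ j → j' ∈ SB := by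
      intro j hj j' hle
      simp only [hSB, Finset.mem_filter, Finset.mem_univ, true_and] at hj ⊢
      exact le_trans hj (hanti hle)
    have := lv_initseg SB hdc
    rw [hSBcard] at this
    intro j
    constructor
    · intro h
      have : j ∈ Finset.univ.filter fun j : Fin n => (j : ℕ) < B.card := by
        rw [← this]
        simp only [hSB, Finset.mem_filter, Finset.mem_univ, true_and]
        exact h
      simpa using this
    · intro h
      have hj : j ∈ SB := by
        rw [this]
        simp only [Finset.mem_filter, Finset.mem_univ, true_and]
        exact h
      simpa [hSB] using hj
  set yform : ℕ → ℝ := fun j => if j < A.card then a + b else if j < B.card then b else 0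
    with hyform
  have hyval : ∀ j : Fin n, x (σ j) = yform (j : ℕ) := by
    intro j
    rw [hyform]
    simp only
    by_cases h1 : (j : ℕ) < A.card
    · rw [if_pos h1]
      exact (memSA j).mpr h1
    · rw [if_neg h1]
      by_cases h2 : (j : ℕ) < B.card
      · rw [if_pos h2]
        have hbe : b ≤ x (σ j) := (memSB j).mpr h2
        have hne : x (σ j) ≠ a + b := fun h => h1 ((memSA j).mp h)
        rw [hx (σ j)] at hbe hne ⊢
        split_ifs at hbe hne ⊢ with g1 g2
        · exact absurd rfl hne
        · rfl
        · linarith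
      · rw [if_neg h2]
        have hnb : ¬ b ≤ x (σ j) := fun h => h2 ((memSB j).mp h)
        rw [hx (σ j)] at hnb ⊢
        split_ifs at hnb ⊢ with g1 g2
        · exact absurd (by linarith : b ≤ a + b) hnb
        · exact absurd le_rfl hnb
        · rfl
  have hcA : lvChain σ A.card = A := by
    ext i
    simp only [lvChain, Finset.mem_filter, Finset.mem_univ, true_and]
    rw [← hxA i]
    have h1 : x (σ (σ.symm i)) = x i := by rw [Equiv.apply_symm_apply]
    rw [← h1]
    exact (memSA (σ.symm i)).symm
  have hcB : lvChain σ B.card = B := by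
    ext i
    simp only [lvChain, Finset.mem_filter, Finset.mem_univ, true_and]
    rw [← hxB i]
    have h1 : x (σ (σ.symm i)) = x i := by rw [Equiv.apply_symm_apply]
    rw [← h1]
    exact (memSB (σ.symm i)).symm
  have hcards : A.card ≤ B.card := Finset.card_le_card hAB
  have hBn : B.card ≤ n := by
    have := Finset.card_le_univ B
    simpa using this
  rw [lovasz_eq_lvForm, ← hσ]
  unfold lvForm
  have hsum : ∑ j : Fin n, x (σ j) * lvC F σ (j : ℕ)
      = ∑ j ∈ Finset.range n, yform j * lvC F σ j := by
    rw [← Fin.sum_univ_eq_sum_range]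
    exact Finset.sum_congr rfl fun j _ => by rw [hyval j]
  have hten : ∀ m : ℕ, ∑ j ∈ Finset.range m, lvC F σ j = F (lvChain σ m) - F ∅ :=
    fun m => lv_sum_c F σ m
  have hIcoAB : ∑ j ∈ Finset.Ico A.card B.card, lvC F σ j = F B - F A := by
    have h := Finset.sum_Ico_consecutive (fun j => lvC F σ j)
      (Nat.zero_le A.card) hcards
    rw [← Finset.range_eq_Ico, ← Finset.range_eq_Ico] at h
    rw [hten A.card, hten B.card, hcA, hcB] at h
    linarith
  have hmid : ∑ j ∈ Finset.Ico A.card B.card, yform j * lvC F σ j = b * (F B - F A) := by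
    have : ∑ j ∈ Finset.Ico A.card B.card, yform j * lvC F σ j
        = ∑ j ∈ Finset.Ico A.card B.card, b * lvC F σ j := by
      apply Finset.sum_congr rfl
      intro j hj
      rw [Finset.mem_Ico] at hj
      rw [hyform]
      simp only
      rw [if_neg (by omega), if_pos hj.2]
    rw [this, ← Finset.mul_sum, hIcoAB]
  have hlow : ∑ j ∈ Finset.range A.card, yform j * lvC F σ j = (a + b) * (F A - F ∅) := by
    have : ∑ j ∈ Finset.range A.card, yform j * lvC F σ j
        = ∑ j ∈ Finset.range A.card, (a + b) * lvC F σ j := by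
      apply Finset.sum_congr rfl
      intro j hj
      rw [Finset.mem_range] at hj
      rw [hyform]
      simp only
      rw [if_pos hj]
    rw [this, ← Finset.mul_sum, hten A.card, hcA]
  have hhigh : ∑ j ∈ Finset.Ico B.card n, yform j * lvC F σ j = 0 := by
    apply Finset.sum_eq_zero
    intro j hj
    rw [Finset.mem_Ico] at hj
    rw [hyform]
    simp only
    rw [if_neg (by omega), if_neg (by omega), zero_mul]
  have hsplitB := Finset.sum_Ico_consecutive (fun j => yform j * lvC F σ j)
    (Nat.zero_le B.card) hBn
  have hsplitA := Finset.sum_Ico_consecutive (fun j => yform j * lvC F σ j)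
    (Nat.zero_le A.card) hcards
  rw [← Finset.range_eq_Ico, ← Finset.range_eq_Ico] at hsplitB hsplitA
  rw [hsum]
  linarith [hsplitA, hsplitB, hlow, hmid, hhigh]



lemma lvForm_affine (F : Finset (Fin n) → ℝ) (q : Equiv.Perm (Fin n)) (x z : Fin n → ℝ)
    (p r : ℝ) (hpr : p + r = 1) :
    lvForm F q (p • x + r • z) = p * lvForm F q x + r * lvForm F q z := by
  unfold lvForm
  have h1 : ∑ j : Fin n, (p • x + r • z) (q j) * lvC F q (j : ℕ)
      = p * ∑ j : Fin n, x (q j) * lvC F q (j : ℕ)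
        + r * ∑ j : Fin n, z (q j) * lvC F q (j : ℕ) := by
    rw [Finset.mul_sum, Finset.mul_sum, ← Finset.sum_add_distrib]
    apply Finset.sum_congr rfl
    intro j _
    simp only [Pi.add_apply, Pi.smul_apply, smul_eq_mul]
    ring
  rw [h1]
  linear_combination (-(F ∅)) * hpr

theorem submodular_iff_lovasz_convex' (F : Finset (Fin n) → ℝ) :
    Submodular F ↔ ConvexOn ℝ Set.univ (lovasz F) := by
  constructor
  · intro hF
    refine ⟨convex_univ, ?_⟩
    intro x _ z _ p r hp hr hpr
    rw [lovasz_eq_lvForm F (p • x + r • z), lvForm_affine F _ x z p r hpr]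
    have h1 := lv_maxle F hF (lvSortq (p • x + r • z)) x
    have h2 := lv_maxle F hF (lvSortq (p • x + r • z)) z
    have h3 := mul_le_mul_of_nonneg_left h1 hp
    have h4 := mul_le_mul_of_nonneg_left h2 hr
    simp only [smul_eq_mul]
    linarith
  · intro hconv A B
    have hevA : lovasz F (fun i => (if i ∈ A then (1:ℝ)/2 else 0)
        + (if i ∈ A then (1:ℝ)/2 else 0)) = F A := by
      rw [lv_eval F A A (subset_refl A) (1/2) (1/2) (by norm_num) (by norm_num)]
      ring
    have hevB : lovasz F (fun i => (if i ∈ B then (1:ℝ)/2 else 0)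
        + (if i ∈ B then (1:ℝ)/2 else 0)) = F B := by
      rw [lv_eval F B B (subset_refl B) (1/2) (1/2) (by norm_num) (by norm_num)]
      ring
    have hevM : lovasz F (fun i => (if i ∈ A ∩ B then (1:ℝ)/2 else 0)
        + (if i ∈ A ∪ B then (1:ℝ)/2 else 0))
        = F ∅ + (1/2) * (F (A ∩ B) - F ∅) + (1/2) * (F (A ∪ B) - F ∅) :=
      lv_eval F (A ∩ B) (A ∪ B) (Finset.inter_subset_union) (1/2) (1/2)
        (by norm_num) (by norm_num)
    have hcomb : ((1:ℝ)/2) • (fun i => (if i ∈ A then (1:ℝ)/2 else 0)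
          + (if i ∈ A then (1:ℝ)/2 else 0))
        + ((1:ℝ)/2) • (fun i => (if i ∈ B then (1:ℝ)/2 else 0)
          + (if i ∈ B then (1:ℝ)/2 else 0))
        = (fun i : Fin n => (if i ∈ A ∩ B then (1:ℝ)/2 else 0)
          + (if i ∈ A ∪ B then (1:ℝ)/2 else 0)) := by
      funext i
      simp only [Pi.add_apply, Pi.smul_apply, smul_eq_mul, Finset.mem_inter, Finset.mem_union]
      by_cases hA : i ∈ A <;> by_cases hB : i ∈ B <;> simp [hA, hB] <;> norm_num
    have h := hconv.2
      (Set.mem_univ (fun i : Fin n => (if i ∈ A then (1:ℝ)/2 else 0)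
        + (if i ∈ A then (1:ℝ)/2 else 0)))
      (Set.mem_univ (fun i : Fin n => (if i ∈ B then (1:ℝ)/2 else 0)
        + (if i ∈ B then (1:ℝ)/2 else 0)))
      (by norm_num : (0:ℝ) ≤ 1/2) (by norm_num : (0:ℝ) ≤ 1/2) (by norm_num : (1:ℝ)/2 + 1/2 = 1)
    rw [hcomb, hevM, hevA, hevB] at h
    simp only [smul_eq_mul] at h
    linarith


/-- A set function is submodular iff its Lovász extension is convex. -/
theorem submodular_iff_lovasz_convex (n : ℕ) (F : Finset (Fin n) → ℝ) :
    Submodular F ↔ ConvexOn ℝ Set.univ (lovasz F) := by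
  exact submodular_iff_lovasz_convex' F
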